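/- For any finite set Q of k linear queries on a finite universe X, any database D ∈ ℕ^X with ‖D‖₁ = n, and any α > 0, there exists a database D' ∈ ℕ^X of size ‖D'‖₁ = ⌈n²·log k/α²⌉ such that |q(D) - (n/‖D'‖₁)·q(D')| ≤ α for all q ∈ Q. -/

import Mathlib

open BigOperators

open Real Finset

lemma hoeff_aux (p : ℝ) (hp0 : 0 ≤ p) (hp1 : p ≤ 1) (t : ℝ) :
    1 - p + p * Real.exp t ≤ Real.exp (p * t + t ^ 2 / 8) := by
  set g : ℝ → ℝ := fun s => 1 - p + p * Real.exp s with hg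
  have hgpos : ∀ s, 0 < g s := by
    intro s
    rcases eq_or_lt_of_le hp0 with h | h
    · simp [hg, ← h]
    · have h1 : 0 < p * Real.exp s := mul_pos h (Real.exp_pos s)
      have h2 : (0:ℝ) ≤ 1 - p := by linarith
      simpa [hg] using add_pos_of_nonneg_of_pos h2 h1
  set f : ℝ → ℝ := fun s => p * s + s ^ 2 / 8 - Real.log (g s) with hf
  set f' : ℝ → ℝ := fun s => p + s / 4 - p * Real.exp s / g s with hf'
  have hderiv_g : ∀ s, HasDerivAt g (p * Real.exp s) s := fun s =>
    ((Real.hasDerivAt_exp s).const_mul p).const_add (1 - p)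
  have hderiv_f : ∀ s, HasDerivAt f (f' s) s := by
    intro s
    have h1 : HasDerivAt (fun x : ℝ => p * x) p s := by
      simpa using (hasDerivAt_id s).const_mul p
    have h2 : HasDerivAt (fun x : ℝ => x ^ 2 / 8) (s / 4) s := by
      have := (hasDerivAt_pow 2 s).div_const 8
      refine this.congr_deriv ?_
      norm_num
      ring
    have h3 : HasDerivAt (fun x => Real.log (g x)) (p * Real.exp s / g s) s :=
      (hderiv_g s).log (ne_of_gt (hgpos s))
    exact (h1.add h2).sub h3
  set f'' : ℝ → ℝ := fun s =>
    1 / 4 - (p * Real.exp s * g s - p * Real.exp s * (p * Real.exp s)) / (g s) ^ 2 with hf''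
  have hderiv_f' : ∀ s, HasDerivAt f' (f'' s) s := by
    intro s
    have h2 : HasDerivAt (fun x : ℝ => p + x / 4) (1 / 4) s := by
      simpa using ((hasDerivAt_id s).div_const 4).const_add p
    have h3 : HasDerivAt (fun x => p * Real.exp x / g x)
        ((p * Real.exp s * g s - p * Real.exp s * (p * Real.exp s)) / (g s) ^ 2) s :=
      ((Real.hasDerivAt_exp s).const_mul p).div (hderiv_g s) (ne_of_gt (hgpos s))
    exact h2.sub h3
  have hf''_nonneg : ∀ s, 0 ≤ f'' s := by
    intro s
    have hgs : g s = 1 - p + p * Real.exp s := rfl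
    have hb : 0 ≤ p * Real.exp s := mul_nonneg hp0 (Real.exp_pos s).le
    have key : p * Real.exp s * g s - p * Real.exp s * (p * Real.exp s) ≤ (g s) ^ 2 / 4 := by
      rw [hgs]; nlinarith [sq_nonneg (1 - p - p * Real.exp s)]
    have hg2 : (0:ℝ) < (g s) ^ 2 := pow_pos (hgpos s) 2
    have : (p * Real.exp s * g s - p * Real.exp s * (p * Real.exp s)) / (g s) ^ 2 ≤ 1 / 4 := by
      rw [div_le_iff₀ hg2]; nlinarith
    simp only [hf'']; linarith
  have hmono : Monotone f' := by
    apply monotone_of_deriv_nonneg (fun s => (hderiv_f' s).differentiableAt)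
    intro s; rw [(hderiv_f' s).deriv]; exact hf''_nonneg s
  have hf'0 : f' 0 = 0 := by simp [hf', hg]
  have hf0 : f 0 = 0 := by simp [hf, hg]
  have hfnonneg : 0 ≤ f t := by
    rcases le_total 0 t with ht | ht
    · have hmOn : MonotoneOn f (Set.Ici 0) := by
        apply monotoneOn_of_deriv_nonneg (convex_Ici 0)
          (fun s _ => ((hderiv_f s).continuousAt).continuousWithinAt)
          (fun s _ => (hderiv_f s).differentiableAt.differentiableWithinAt)
        intro s hs
        rw [(hderiv_f s).deriv]
        rw [interior_Ici] at hs
        calc (0:ℝ) = f' 0 := hf'0.symm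
          _ ≤ f' s := hmono (le_of_lt hs)
      have := hmOn (Set.self_mem_Ici) (Set.mem_Ici.mpr ht) ht
      linarith [hf0 ▸ this]
    · have hmOn : AntitoneOn f (Set.Iic 0) := by
        apply antitoneOn_of_deriv_nonpos (convex_Iic 0)
          (fun s _ => ((hderiv_f s).continuousAt).continuousWithinAt)
          (fun s _ => (hderiv_f s).differentiableAt.differentiableWithinAt)
        intro s hs
        rw [(hderiv_f s).deriv]
        rw [interior_Iic] at hs
        calc f' s ≤ f' 0 := hmono (le_of_lt hs)
          _ = 0 := hf'0
      have := hmOn (Set.mem_Iic.mpr ht) (Set.self_mem_Iic) ht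
      linarith [hf0 ▸ this]
  have : Real.log (g t) ≤ p * t + t ^ 2 / 8 := by
    simp only [hf] at hfnonneg; linarith
  have := (Real.log_le_iff_le_exp (hgpos t)).mp this
  simpa [hg] using this

lemma avg_step {X : Type*} [Fintype X] (w y : X → ℝ) (hw : ∀ i, 0 ≤ w i)
    (hw1 : ∑ i, w i = 1) (hy0 : ∀ i, 0 ≤ y i) (hy1 : ∀ i, y i ≤ 1)
    (μ l : ℝ) (hμ : μ = ∑ i, w i * y i) :
    ∑ i, w i * Real.exp (l * (μ - y i)) ≤ Real.exp (l ^ 2 / 8) := by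
  have hμ0 : 0 ≤ μ := by
    rw [hμ]; exact Finset.sum_nonneg fun i _ => mul_nonneg (hw i) (hy0 i)
  have hμ1 : μ ≤ 1 := by
    rw [hμ, ← hw1]
    exact Finset.sum_le_sum fun i _ => by
      calc w i * y i ≤ w i * 1 := mul_le_mul_of_nonneg_left (hy1 i) (hw i)
        _ = w i := mul_one _
  have point : ∀ i, Real.exp (l * (μ - y i)) ≤
      (1 - y i) * Real.exp (l * μ) + y i * Real.exp (l * (μ - 1)) := by
    intro i
    have h := convexOn_exp.2 (Set.mem_univ (l * μ)) (Set.mem_univ (l * (μ - 1)))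
      (by linarith [hy1 i] : (0:ℝ) ≤ 1 - y i) (hy0 i) (by ring)
    have harg : (1 - y i) • (l * μ) + y i • (l * (μ - 1)) = l * (μ - y i) := by
      simp only [smul_eq_mul]; ring
    rw [harg] at h
    simpa [smul_eq_mul] using h
  calc ∑ i, w i * Real.exp (l * (μ - y i))
      ≤ ∑ i, w i * ((1 - y i) * Real.exp (l * μ) + y i * Real.exp (l * (μ - 1))) :=
        Finset.sum_le_sum fun i _ => mul_le_mul_of_nonneg_left (point i) (hw i)
    _ = ∑ i, (w i * Real.exp (l * μ) - (w i * y i) * Real.exp (l * μ)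
          + (w i * y i) * Real.exp (l * (μ - 1))) := by
        apply Finset.sum_congr rfl; intro i _; ring
    _ = (∑ i, w i) * Real.exp (l * μ) - (∑ i, w i * y i) * Real.exp (l * μ)
          + (∑ i, w i * y i) * Real.exp (l * (μ - 1)) := by
        rw [Finset.sum_add_distrib, Finset.sum_sub_distrib, ← Finset.sum_mul,
          ← Finset.sum_mul, ← Finset.sum_mul]
    _ = Real.exp (l * μ) * (1 - μ + μ * Real.exp (-l)) := by
        rw [hw1, ← hμ, show l * (μ - 1) = l * μ + -l by ring, Real.exp_add]; ring
    _ ≤ Real.exp (l * μ) * Real.exp (μ * (-l) + (-l) ^ 2 / 8) :=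
        mul_le_mul_of_nonneg_left (hoeff_aux μ hμ0 hμ1 (-l)) (Real.exp_pos _).le
    _ = Real.exp (l ^ 2 / 8) := by
        rw [← Real.exp_add]; congr 1; ring

lemma sq_helper (Lr R : ℝ) (h0 : 0 < Lr) (hR : Lr ≤ 2 * R) :
    (2 * Lr) ^ 2 ≤ 8 * Lr * R := by nlinarith

set_option maxHeartbeats 1000000 in
/-- Blum–Ligett–Roth small-database theorem: for any `k ≥ 2` linear queries
and any database `D` of size `n ≥ 1`, there is a database `D'` of size
`⌈n² log k / α²⌉` whose (rescaled) answers agree with those of `D` up to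
additive error `α` on every query. -/
theorem small_database_for_linear_queries
    {X : Type*} [Fintype X] [Nonempty X]
    (k n : ℕ) (hk : 2 ≤ k) (hn : 1 ≤ n)
    (Q : Fin k → X → ℝ) (hQ : ∀ j i, Q j i ∈ Set.Icc (0 : ℝ) 1)
    (D : X → ℕ) (hD : ∑ i, D i = n)
    (α : ℝ) (hα : 0 < α) :
    ∃ D' : X → ℕ,
      (∑ i, D' i) = ⌈(n : ℝ) ^ 2 * Real.log k / α ^ 2⌉₊ ∧
      ∀ j, |(∑ i, Q j i * (D i : ℝ)) -
          ((n : ℝ) / (∑ i, (D' i : ℝ))) * ∑ i, Q j i * (D' i : ℝ)| ≤ α := by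
  classical
  have hn0 : (0:ℝ) < n := by
    have : 0 < n := Nat.lt_of_lt_of_le Nat.zero_lt_one hn
    exact_mod_cast this
  have hk2 : (2:ℝ) ≤ k := by exact_mod_cast hk
  have hlogk : 0 < Real.log k := Real.log_pos (by linarith)
  set m : ℕ := ⌈(n : ℝ) ^ 2 * Real.log k / α ^ 2⌉₊ with hm
  have hmge : (n:ℝ) ^ 2 * Real.log k / α ^ 2 ≤ m := Nat.le_ceil _
  have hm1 : 0 < m := Nat.ceil_pos.mpr (by positivity)
  have hm0 : (0:ℝ) < m := by exact_mod_cast hm1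
  set L : ℝ := Real.log (2 * k) with hL
  have hL0 : 0 < L := Real.log_pos (by linarith)
  have hLlek : L ≤ 2 * Real.log k := by
    rw [hL, Real.log_mul two_ne_zero (by positivity), two_mul]
    have h2 : Real.log 2 ≤ Real.log k := Real.log_le_log (by norm_num) hk2
    linarith
  set l : ℝ := Real.sqrt (8 * L / m) with hldef
  have hl0 : 0 < l := Real.sqrt_pos.mpr (by positivity)
  have hl2 : l ^ 2 = 8 * L / m := Real.sq_sqrt (by positivity)
  clear_value l L m
  set w : X → ℝ := fun i => (D i : ℝ) / n with hwdef
  have hw0 : ∀ i, 0 ≤ w i := fun i => div_nonneg (Nat.cast_nonneg _) hn0.le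
  have hDsum : ∑ i, (D i : ℝ) = n := by exact_mod_cast hD
  have hw1 : ∑ i, w i = 1 := by
    simp only [hwdef]
    rw [← Finset.sum_div, hDsum, div_self hn0.ne']
  set μ : Fin k → ℝ := fun j => ∑ i, w i * Q j i with hμdef
  have hnμ : ∀ j, ∑ i, Q j i * (D i : ℝ) = n * μ j := by
    intro j
    simp only [hμdef]
    rw [Finset.mul_sum]
    apply Finset.sum_congr rfl
    intro i _
    simp only [hwdef]
    field_simp
  -- greedy induction
  have greedy : ∀ t : ℕ, ∃ c : X → ℕ, (∑ i, c i) = t ∧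
      (∑ j, (Real.exp (l * ((t:ℝ) * μ j - ∑ i, Q j i * (c i : ℝ)))
        + Real.exp (-(l * ((t:ℝ) * μ j - ∑ i, Q j i * (c i : ℝ))))))
        ≤ 2 * k * Real.exp ((t:ℝ) * l ^ 2 / 8) := by
    intro t
    induction t with
    | zero =>
      refine ⟨fun _ => 0, by simp, ?_⟩
      simp [Finset.sum_const, Finset.card_univ]
      linarith
    | succ t ih =>
      obtain ⟨c, hcs, hcΦ⟩ := ih
      set d : Fin k → ℝ := fun j => (t:ℝ) * μ j - ∑ i, Q j i * (c i : ℝ) with hd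
      set Ψ : X → ℝ := fun i₀ => ∑ j, (Real.exp (l * (d j + (μ j - Q j i₀)))
        + Real.exp (-(l * (d j + (μ j - Q j i₀))))) with hΨ
      have havg : ∑ i, w i * Ψ i ≤
          Real.exp (l ^ 2 / 8) * ∑ j, (Real.exp (l * d j) + Real.exp (-(l * d j))) := by
        calc ∑ i, w i * Ψ i
            = ∑ j, ∑ i, w i * (Real.exp (l * (d j + (μ j - Q j i)))
              + Real.exp (-(l * (d j + (μ j - Q j i))))) := by
              simp only [hΨ, Finset.mul_sum]
              exact Finset.sum_comm
          _ ≤ ∑ j, Real.exp (l ^ 2 / 8) * (Real.exp (l * d j) + Real.exp (-(l * d j))) := by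
              apply Finset.sum_le_sum
              intro j _
              have hq0 : ∀ i, 0 ≤ Q j i := fun i => (hQ j i).1
              have hq1 : ∀ i, Q j i ≤ 1 := fun i => (hQ j i).2
              have hplus : ∑ i, w i * Real.exp (l * (μ j - Q j i)) ≤ Real.exp (l ^ 2 / 8) :=
                avg_step w (Q j) hw0 hw1 hq0 hq1 (μ j) l rfl
              have hminus : ∑ i, w i * Real.exp ((-l) * (μ j - Q j i)) ≤ Real.exp (l ^ 2 / 8) := by
                have h := avg_step w (Q j) hw0 hw1 hq0 hq1 (μ j) (-l) rfl
                rwa [neg_sq] at h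
              have split : ∑ i, w i * (Real.exp (l * (d j + (μ j - Q j i)))
                    + Real.exp (-(l * (d j + (μ j - Q j i)))))
                  = Real.exp (l * d j) * ∑ i, w i * Real.exp (l * (μ j - Q j i))
                    + Real.exp (-(l * d j)) * ∑ i, w i * Real.exp ((-l) * (μ j - Q j i)) := by
                rw [Finset.mul_sum, Finset.mul_sum, ← Finset.sum_add_distrib]
                apply Finset.sum_congr rfl
                intro i _
                rw [show l * (d j + (μ j - Q j i)) = l * d j + l * (μ j - Q j i) by ring]
                rw [show -(l * d j + l * (μ j - Q j i)) = -(l * d j) + -l * (μ j - Q j i) by ring]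
                rw [Real.exp_add, Real.exp_add]
                ring
              rw [split]
              calc Real.exp (l * d j) * ∑ i, w i * Real.exp (l * (μ j - Q j i))
                    + Real.exp (-(l * d j)) * ∑ i, w i * Real.exp ((-l) * (μ j - Q j i))
                  ≤ Real.exp (l * d j) * Real.exp (l ^ 2 / 8)
                    + Real.exp (-(l * d j)) * Real.exp (l ^ 2 / 8) :=
                    add_le_add (mul_le_mul_of_nonneg_left hplus (Real.exp_pos _).le)
                      (mul_le_mul_of_nonneg_left hminus (Real.exp_pos _).le)
                _ = Real.exp (l ^ 2 / 8) * (Real.exp (l * d j) + Real.exp (-(l * d j))) := by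
                    ring
          _ = _ := by rw [← Finset.mul_sum]
      have hmain : ∑ i, w i * Ψ i ≤ 2 * k * Real.exp (((t:ℝ) + 1) * l ^ 2 / 8) := by
        calc ∑ i, w i * Ψ i
            ≤ Real.exp (l ^ 2 / 8) * ∑ j, (Real.exp (l * d j) + Real.exp (-(l * d j))) := havg
          _ ≤ Real.exp (l ^ 2 / 8) * (2 * k * Real.exp ((t:ℝ) * l ^ 2 / 8)) :=
              mul_le_mul_of_nonneg_left hcΦ (Real.exp_pos _).le
          _ = 2 * k * Real.exp (((t:ℝ) + 1) * l ^ 2 / 8) := by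
              rw [show ((t:ℝ) + 1) * l ^ 2 / 8 = l ^ 2 / 8 + (t:ℝ) * l ^ 2 / 8 by ring,
                Real.exp_add]
              ring
      have hex : ∃ i₀, Ψ i₀ ≤ 2 * k * Real.exp (((t:ℝ) + 1) * l ^ 2 / 8) := by
        by_contra hcon
        push_neg at hcon
        have hne : ∃ i₀, 0 < D i₀ := by
          by_contra h'
          push_neg at h'
          have : ∑ i, D i = 0 := Finset.sum_eq_zero fun i _ => Nat.le_zero.mp (h' i)
          omega
        obtain ⟨i₀, hi₀⟩ := hne
        have hwi : 0 < w i₀ := by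
          apply div_pos _ hn0
          exact_mod_cast hi₀
        have heq : 2 * (k:ℝ) * Real.exp (((t:ℝ) + 1) * l ^ 2 / 8)
            = ∑ i, w i * (2 * k * Real.exp (((t:ℝ) + 1) * l ^ 2 / 8)) := by
          rw [← Finset.sum_mul, hw1, one_mul]
        have hlt : ∑ i, w i * (2 * (k:ℝ) * Real.exp (((t:ℝ) + 1) * l ^ 2 / 8))
            < ∑ i, w i * Ψ i := by
          apply Finset.sum_lt_sum
          · intro i _
            exact mul_le_mul_of_nonneg_left (hcon i).le (hw0 i)
          · exact ⟨i₀, Finset.mem_univ _, mul_lt_mul_of_pos_left (hcon i₀) hwi⟩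
        rw [← heq] at hlt
        linarith
      obtain ⟨i₀, hi₀⟩ := hex
      refine ⟨fun i => c i + if i = i₀ then 1 else 0, ?_, ?_⟩
      · rw [Finset.sum_add_distrib, hcs]
        simp
      · have hS' : ∀ j, ∑ i, Q j i * (((c i + if i = i₀ then 1 else 0 : ℕ)) : ℝ)
            = (∑ i, Q j i * (c i : ℝ)) + Q j i₀ := by
          intro j
          have hterm : ∀ i ∈ Finset.univ,
              Q j i * (((c i + if i = i₀ then 1 else 0 : ℕ)) : ℝ)
              = Q j i * (c i : ℝ) + (if i = i₀ then Q j i else 0) := by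
            intro i _
            push_cast
            split <;> ring
          rw [Finset.sum_congr rfl hterm, Finset.sum_add_distrib,
            Finset.sum_ite_eq' Finset.univ i₀ (Q j)]
          simp
        have harg : ∀ j, ((t + 1 : ℕ) : ℝ) * μ j
              - ∑ i, Q j i * (((c i + if i = i₀ then 1 else 0 : ℕ)) : ℝ)
            = d j + (μ j - Q j i₀) := by
          intro j
          rw [hS' j]
          push_cast
          simp only [hd]
          ring
        have hcast : ((t + 1 : ℕ) : ℝ) = (t : ℝ) + 1 := by push_cast; ring
        calc ∑ j, (Real.exp (l * (((t + 1 : ℕ) : ℝ) * μ j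
                - ∑ i, Q j i * (((c i + if i = i₀ then 1 else 0 : ℕ)) : ℝ)))
              + Real.exp (-(l * (((t + 1 : ℕ) : ℝ) * μ j
                - ∑ i, Q j i * (((c i + if i = i₀ then 1 else 0 : ℕ)) : ℝ)))))
            = Ψ i₀ := by
              rw [hΨ]
              apply Finset.sum_congr rfl
              intro j _
              rw [harg j]
          _ ≤ 2 * k * Real.exp (((t:ℝ) + 1) * l ^ 2 / 8) := hi₀
          _ = 2 * k * Real.exp (((t + 1 : ℕ) : ℝ) * l ^ 2 / 8) := by rw [hcast]
  -- assemble
  obtain ⟨c, hcs, hcΦ⟩ := greedy m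
  refine ⟨c, hcs, ?_⟩
  intro j
  have hcsR : ∑ i, (c i : ℝ) = m := by exact_mod_cast hcs
  set S : ℝ := ∑ i, Q j i * (c i : ℝ) with hS
  set dj : ℝ := (m : ℝ) * μ j - S with hdj
  have h2k : (0:ℝ) < 2 * k := by linarith
  have hBd : 2 * (k:ℝ) * Real.exp ((m:ℝ) * l ^ 2 / 8)
      = Real.exp (L + (m:ℝ) * l ^ 2 / 8) := by
    rw [Real.exp_add, hL, Real.exp_log h2k]
  have hterm_le : ∀ x ∈ ({Real.exp (l * dj), Real.exp (-(l * dj))} : Set ℝ),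
      x ≤ Real.exp (L + (m:ℝ) * l ^ 2 / 8) := by
    intro x hx
    have hone : Real.exp (l * dj) + Real.exp (-(l * dj))
        ≤ 2 * k * Real.exp ((m:ℝ) * l ^ 2 / 8) := by
      refine le_trans ?_ hcΦ
      exact Finset.single_le_sum (f := fun j' => Real.exp (l * ((m:ℝ) * μ j'
          - ∑ i, Q j' i * (c i : ℝ)))
          + Real.exp (-(l * ((m:ℝ) * μ j' - ∑ i, Q j' i * (c i : ℝ)))))
        (fun j' _ => by positivity) (Finset.mem_univ j)
    rw [hBd] at hone
    rcases hx with hx | hx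
    · rw [hx]
      linarith [(Real.exp_pos (-(l * dj))).le]
    · simp only [Set.mem_singleton_iff] at hx
      rw [hx]
      linarith [(Real.exp_pos (l * dj)).le]
  have hup : l * dj ≤ L + (m:ℝ) * l ^ 2 / 8 :=
    Real.exp_le_exp.mp (hterm_le _ (by left; rfl))
  have hdown : -(l * dj) ≤ L + (m:ℝ) * l ^ 2 / 8 :=
    Real.exp_le_exp.mp (hterm_le _ (by right; rfl))
  have hml2 : (m:ℝ) * l ^ 2 / 8 = L := by
    rw [hl2]
    field_simp
  have habs : l * |dj| ≤ 2 * L := by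
    rw [hml2] at hup hdown
    rcases abs_cases dj with ⟨h1, _⟩ | ⟨h1, _⟩ <;> rw [h1] <;> nlinarith
  have hkey : 2 * L ≤ l * ((m:ℝ) * α / n) := by
    have hα2 : Real.log k ≤ (m:ℝ) * α ^ 2 / (n:ℝ) ^ 2 := by
      rw [div_le_iff₀ (by positivity : (0:ℝ) < α ^ 2)] at hmge
      rw [le_div_iff₀ (by positivity : (0:ℝ) < (n:ℝ) ^ 2)]
      linarith
    have hsq : (2 * L) ^ 2 ≤ (l * ((m:ℝ) * α / n)) ^ 2 := by
      have he : (l * ((m:ℝ) * α / n)) ^ 2 = l ^ 2 * ((m:ℝ) * α / n) ^ 2 := by ring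
      rw [he, hl2]
      have he2 : 8 * L / (m:ℝ) * ((m:ℝ) * α / n) ^ 2
          = 8 * L * ((m:ℝ) * α ^ 2 / (n:ℝ) ^ 2) := by
        field_simp
      rw [he2]
      have hR : L ≤ 2 * ((m:ℝ) * α ^ 2 / (n:ℝ) ^ 2) := by linarith
      exact sq_helper L _ hL0 hR
    have hrhs0 : 0 ≤ l * ((m:ℝ) * α / n) := by positivity
    exact le_of_pow_le_pow_left₀ two_ne_zero hrhs0 hsq
  have hdjle : |dj| ≤ (m:ℝ) * α / n := by
    have := le_trans habs hkey
    exact (mul_le_mul_iff_right₀ hl0).mp this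
  have hrw : (∑ i, Q j i * (D i : ℝ)) - ((n:ℝ) / (∑ i, (c i : ℝ))) * S
      = ((n:ℝ) / m) * dj := by
    rw [hcsR, hnμ j, hdj]
    field_simp
  rw [hrw, abs_mul, abs_of_pos (div_pos hn0 hm0)]
  calc (n:ℝ) / m * |dj| ≤ (n:ℝ) / m * ((m:ℝ) * α / n) :=
        mul_le_mul_of_nonneg_left hdjle (div_pos hn0 hm0).le
    _ = α := by
        field_simp
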